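/- Structure of near-maximizers of the tree variational problem: let γ > 1. There exists a constant c = c(γ) > 0 such that the following holds: for every sufficiently small ε > 0 (depending only on γ), for every finite tree T and every vector u = (u_i)_{i∈V(T)} with u_i ≥ 0 and Σ_{i∈V(T)} u_i = 1 satisfying (2·Σ_{{i,j}∈E(T)} u_i^γ u_j^γ)^{1/(2γ)} ≥ (1−ε)·2^{1/(2γ)−1}, there exist vertices i₀ and j₀ connected by an edge of T such that u_{i₀} ≥ 1/2 − c·√ε and u_{j₀} ≥ 1/2 − c·√ε. -/

import Mathlib

open MeasureTheory ProbabilityTheory Filter Real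
open scoped ENNReal NNReal

noncomputable section

instance matrixMeasurableSpace {m n α : Type*} [MeasurableSpace α] :
    MeasurableSpace (Matrix m n α) :=
  inferInstanceAs (MeasurableSpace (m → n → α))

/-- The largest eigenvalue of a real square matrix: the supremum of its real eigenvalues. -/
def lam1 {n : ℕ} (M : Matrix (Fin n) (Fin n) ℝ) : ℝ :=
  sSup {r : ℝ | ∃ v : Fin n → ℝ, v ≠ 0 ∧ M.mulVec v = r • v}

open Classical in
/-- The sum of `f i j` over the undirected edges `{i, j}` of `G`
(assuming `f` is symmetric, each undirected edge is counted once). -/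
def edgeSum {m : ℕ} (G : SimpleGraph (Fin m)) (f : Fin m → Fin m → ℝ) : ℝ :=
  (∑ i, ∑ j, if G.Adj i j then f i j else 0) / 2

/-- The maximum degree of `G` is at most `d`. -/
def MaxDegLE {m : ℕ} (G : SimpleGraph (Fin m)) (d : ℕ) : Prop :=
  ∀ v, {w | G.Adj v w}.ncard ≤ d

lemma tree_two_coloring {m : ℕ} {T : SimpleGraph (Fin m)} (hT : T.IsTree) :
    ∃ c : Fin m → Bool, ∀ i j, T.Adj i j → c i ≠ c j := by
  classical
  obtain ⟨r⟩ : Nonempty (Fin m) := hT.isConnected.nonempty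
  have hU := hT.existsUnique_path
  set P : ∀ v, T.Walk r v := fun v => (hU r v).choose with hPdef
  have hP : ∀ v, (P v).IsPath := fun v => (hU r v).choose_spec.1
  have hPu : ∀ v (q : T.Walk r v), q.IsPath → q = P v := fun v q hq =>
    ((hU r v).choose_spec.2 q hq)
  have key : ∀ i j, T.Adj i j →
      (P j).length = (P i).length + 1 ∨ (P i).length = (P j).length + 1 := by
    intro i j h
    by_cases hj : j ∈ (P i).support
    · right
      have hq1 : ((P i).takeUntil j hj).IsPath := (hP i).takeUntil hj
      have hq2 : ((P i).dropUntil j hj).IsPath := (hP i).dropUntil hj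
      have hsingle : (SimpleGraph.Walk.cons h.symm SimpleGraph.Walk.nil : T.Walk j i).IsPath := by
        simp [SimpleGraph.Walk.cons_isPath_iff, h.ne']
      have heq1 : (P i).takeUntil j hj = P j := hPu j _ hq1
      have heq2 : (P i).dropUntil j hj = SimpleGraph.Walk.cons h.symm SimpleGraph.Walk.nil :=
        (hT.existsUnique_path j i).unique hq2 hsingle
      have hspec := (P i).take_spec hj
      have := congrArg SimpleGraph.Walk.length hspec
      rw [SimpleGraph.Walk.length_append, heq1, heq2] at this
      simp at this
      omega
    · left
      have hw : ((P i).concat h).IsPath := by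
        rw [← SimpleGraph.Walk.isPath_reverse_iff, SimpleGraph.Walk.reverse_concat,
          SimpleGraph.Walk.cons_isPath_iff]
        refine ⟨(hP i).reverse, ?_⟩
        rw [SimpleGraph.Walk.support_reverse, List.mem_reverse]
        exact hj
      have := hPu j _ hw
      rw [← this, SimpleGraph.Walk.length_concat]
  refine ⟨fun v => decide ((P v).length % 2 = 1), fun i j h => ?_⟩
  rcases key i j h with hk | hk <;>
    (simp only [ne_eq, decide_eq_decide]; omega)

open Classical in
lemma tree_bip_bound {m : ℕ} {T : SimpleGraph (Fin m)} (hT : T.IsTree) (u : Fin m → ℝ)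
    (hu : ∀ i, 0 ≤ u i) (hsum : ∑ i, u i = 1) :
    ∑ i, ∑ j, (if T.Adj i j then u i * u j else 0) ≤ 1 / 2 := by
  obtain ⟨c, hc⟩ := tree_two_coloring hT
  set a : ℝ := ∑ i, if c i = true then u i else 0 with ha
  set b : ℝ := ∑ i, if c i = false then u i else 0 with hb
  have hab : a + b = 1 := by
    rw [ha, hb, ← Finset.sum_add_distrib, ← hsum]
    refine Finset.sum_congr rfl fun i _ => ?_
    cases h : c i <;> simp [h]
  have hQ : ∑ i, ∑ j, (if c i = c j then u i * u j else 0) = a * a + b * b := by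
    have hterm : ∀ i j : Fin m, (if c i = c j then u i * u j else 0) =
        (if c i = true then u i else 0) * (if c j = true then u j else 0)
        + (if c i = false then u i else 0) * (if c j = false then u j else 0) := by
      intro i j; cases hi : c i <;> cases hj : c j <;> simp [hi, hj]
    simp_rw [hterm, Finset.sum_add_distrib, ← Finset.mul_sum, ← Finset.sum_mul]
    rfl
  have hmain : ∀ i j : Fin m, (if T.Adj i j then u i * u j else 0) ≤
      u i * u j - (if c i = c j then u i * u j else 0) := by
    intro i j
    have huu : 0 ≤ u i * u j := mul_nonneg (hu i) (hu j)
    by_cases h : T.Adj i j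
    · simp [h, hc i j h]
    · rw [if_neg h]
      split_ifs <;> simp <;> linarith
  calc ∑ i, ∑ j, (if T.Adj i j then u i * u j else 0)
      ≤ ∑ i, ∑ j, (u i * u j - (if c i = c j then u i * u j else 0)) :=
        Finset.sum_le_sum fun i _ => Finset.sum_le_sum fun j _ => hmain i j
    _ = (∑ i, ∑ j, u i * u j) - ∑ i, ∑ j, (if c i = c j then u i * u j else 0) := by
        simp_rw [Finset.sum_sub_distrib]
    _ = 1 - (a * a + b * b) := by
        rw [hQ, ← Finset.sum_mul_sum, hsum]; norm_num
    _ ≤ 1 / 2 := by nlinarith [sq_nonneg (a - b)]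

lemma near_half_aux {K ε x y cc : ℝ} (hε : 0 ≤ ε) (hcc : 0 ≤ cc)
    (hc2 : (cc * Real.sqrt ε) ^ 2 = K / 4 * ε) (hx : 0 ≤ x) (hy : 0 ≤ y)
    (hprod : (1 - K * ε) / 4 ≤ x * y) (hsum : x + y ≤ 1) :
    1 / 2 - cc * Real.sqrt ε ≤ x := by
  have key : x * y ≤ x * (1 - x) := mul_le_mul_of_nonneg_left (by linarith) hx
  have hsq : (1/2 - x) ^ 2 ≤ (cc * Real.sqrt ε) ^ 2 := by rw [hc2]; nlinarith
  have habs : |1/2 - x| ≤ cc * Real.sqrt ε := by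
    have h := Real.sqrt_le_sqrt hsq
    rwa [Real.sqrt_sq_eq_abs, Real.sqrt_sq (by positivity)] at h
  linarith [le_abs_self (1/2 - x)]

/-- **Structure of near-maximizers of the tree variational problem, `γ > 1`.** -/
theorem tree_variational_near_maximizer
    (γ : ℝ) (hγ : 1 < γ) :
    ∃ c : ℝ, 0 < c ∧ ∃ ε₀ : ℝ, 0 < ε₀ ∧
      ∀ ε : ℝ, 0 < ε → ε ≤ ε₀ →
      ∀ (m : ℕ) (T : SimpleGraph (Fin m)), T.IsTree →
      ∀ u : Fin m → ℝ, (∀ i, 0 ≤ u i) → (∑ i, u i) = 1 →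
        (1 - ε) * (2 : ℝ) ^ (1 / (2 * γ) - 1) ≤
          (2 * edgeSum T (fun i j => u i ^ γ * u j ^ γ)) ^ (1 / (2 * γ)) →
        ∃ i j, T.Adj i j ∧
          1 / 2 - c * Real.sqrt ε ≤ u i ∧ 1 / 2 - c * Real.sqrt ε ≤ u j := by
  classical
  have hγ0 : (0:ℝ) < γ := by linarith
  have hγ1 : (0:ℝ) < γ - 1 := by linarith
  have h2γ : (0:ℝ) < 2 * γ := by linarith
  set K : ℝ := 2 * γ / (γ - 1) with hKdef
  have hK0 : 0 < K := by positivity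
  have hK1 : 1 ≤ K := by rw [hKdef, le_div_iff₀ hγ1]; linarith
  refine ⟨Real.sqrt K / 2, by positivity, min (1/2) (1/(2*K)), by positivity, ?_⟩
  intro ε hε hεε₀ m T hT u hu hsum hyp
  set c : ℝ := Real.sqrt K / 2 with hcdef
  have hε12 : ε ≤ 1/2 := le_trans hεε₀ (min_le_left _ _)
  have hKε : K * ε ≤ 1/2 := by
    have h2 : ε ≤ 1/(2*K) := le_trans hεε₀ (min_le_right _ _)
    rw [le_div_iff₀ (by positivity)] at h2; nlinarith
  obtain ⟨x⟩ : Nonempty (Fin m) := hT.isConnected.nonempty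
  set S : ℝ := edgeSum T (fun i j => u i ^ γ * u j ^ γ) with hSdef
  have h2S_eq : 2 * S = ∑ i, ∑ j, (if T.Adj i j then u i ^ γ * u j ^ γ else 0) := by
    rw [hSdef, edgeSum]; ring
  have h2Snn : 0 ≤ 2 * S := by
    rw [h2S_eq]
    refine Finset.sum_nonneg fun i _ => Finset.sum_nonneg fun j _ => ?_
    split_ifs
    · exact mul_nonneg (Real.rpow_nonneg (hu i) γ) (Real.rpow_nonneg (hu j) γ)
    · exact le_refl 0
  -- Raise the hypothesis to the power 2γ
  have hA : (0:ℝ) ≤ 1 - ε := by linarith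
  have hexp1 : (1 / (2*γ)) * (2*γ) = 1 := by field_simp
  have hexp2 : (1 / (2*γ) - 1) * (2*γ) = 1 - 2*γ := by field_simp
  have h1 : ((1-ε) * (2:ℝ) ^ (1/(2*γ) - 1)) ^ (2*γ) ≤ ((2*S) ^ (1/(2*γ))) ^ (2*γ) :=
    Real.rpow_le_rpow (mul_nonneg hA (Real.rpow_nonneg (by norm_num) _)) hyp h2γ.le
  rw [← Real.rpow_mul h2Snn, hexp1, Real.rpow_one,
    Real.mul_rpow hA (Real.rpow_nonneg (by norm_num) _),
    ← Real.rpow_mul (by norm_num : (0:ℝ) ≤ 2), hexp2] at h1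
  -- h1 : (1-ε)^(2γ) * 2^(1-2γ) ≤ 2*S
  -- Define p, the max edge product
  have hne : (Finset.univ ×ˢ Finset.univ : Finset (Fin m × Fin m)).Nonempty :=
    ⟨(x, x), by simp⟩
  set w : Fin m × Fin m → ℝ := fun q => if T.Adj q.1 q.2 then u q.1 * u q.2 else 0 with hwdef
  set p : ℝ := (Finset.univ ×ˢ Finset.univ).sup' hne w with hpdef
  have hple : ∀ i j : Fin m, w (i, j) ≤ p := fun i j =>
    Finset.le_sup' w (by simp : (i, j) ∈ Finset.univ ×ˢ Finset.univ)
  have hp0 : 0 ≤ p := by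
    have := hple x x
    simpa [hwdef, SimpleGraph.irrefl] using this
  -- per-term bound
  have hterm : ∀ i j : Fin m, (if T.Adj i j then u i ^ γ * u j ^ γ else 0) ≤
      p ^ (γ - 1) * (if T.Adj i j then u i * u j else 0) := by
    intro i j
    by_cases h : T.Adj i j
    · rw [if_pos h, if_pos h, ← Real.mul_rpow (hu i) (hu j)]
      have hx0 : 0 ≤ u i * u j := mul_nonneg (hu i) (hu j)
      have hxp : u i * u j ≤ p := by simpa [hwdef, h] using hple i j
      rcases eq_or_lt_of_le hx0 with hx | hx
      · rw [← hx, Real.zero_rpow (by positivity : γ ≠ 0), mul_zero]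
      · have hsplit : (u i * u j) ^ γ = (u i * u j) ^ (γ - 1) * (u i * u j) := by
          rw [← Real.rpow_add_one hx.ne' (γ - 1)]; ring_nf
        rw [hsplit]
        exact mul_le_mul_of_nonneg_right
          (Real.rpow_le_rpow hx0 hxp (by linarith)) hx0
    · simp [h]
  -- sum the per-term bound
  have hsum2S : 2 * S ≤ p ^ (γ - 1) * (1/2) := by
    rw [h2S_eq]
    calc (∑ i, ∑ j, if T.Adj i j then u i ^ γ * u j ^ γ else 0)
        ≤ ∑ i, ∑ j, p ^ (γ - 1) * (if T.Adj i j then u i * u j else 0) :=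
          Finset.sum_le_sum fun i _ => Finset.sum_le_sum fun j _ => hterm i j
      _ = p ^ (γ - 1) * ∑ i, ∑ j, (if T.Adj i j then u i * u j else 0) := by
          simp_rw [← Finset.mul_sum]
      _ ≤ p ^ (γ - 1) * (1/2) :=
          mul_le_mul_of_nonneg_left (tree_bip_bound hT u hu hsum)
            (Real.rpow_nonneg hp0 _)
  -- p^(γ-1) ≥ (1-ε)^(2γ) * 2^(2-2γ)
  have h2pow : (2:ℝ) ^ (2 - 2*γ) = 2 ^ (1 - 2*γ) * 2 := by
    rw [show (2 - 2*γ) = (1 - 2*γ) + 1 by ring, Real.rpow_add_one (by norm_num)]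
  have hpK : (1-ε) ^ (2*γ) * 2 ^ (2 - 2*γ) ≤ p ^ (γ - 1) := by
    rw [h2pow]
    nlinarith [Real.rpow_nonneg hA (2*γ)]
  -- raise to power 1/(γ-1)
  have hexp3 : (γ - 1) * (1/(γ-1)) = 1 := by field_simp
  have hexp4 : (2*γ) * (1/(γ-1)) = K := by rw [hKdef]; ring
  have hexp5 : (2 - 2*γ) * (1/(γ-1)) = -2 := by field_simp; ring
  have h2 : ((1-ε) ^ (2*γ) * 2 ^ (2 - 2*γ)) ^ (1/(γ-1)) ≤ (p ^ (γ-1)) ^ (1/(γ-1)) :=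
    Real.rpow_le_rpow (mul_nonneg (Real.rpow_nonneg hA _)
      (Real.rpow_nonneg (by norm_num) _)) hpK (by positivity)
  rw [← Real.rpow_mul hp0, hexp3, Real.rpow_one,
    Real.mul_rpow (Real.rpow_nonneg hA _) (Real.rpow_nonneg (by norm_num) _),
    ← Real.rpow_mul hA, ← Real.rpow_mul (by norm_num : (0:ℝ) ≤ 2),
    hexp4, hexp5] at h2
  have h2neg2 : (2:ℝ) ^ (-2 : ℝ) = 1/4 := by
    rw [show (-2:ℝ) = -(2:ℕ) by norm_num, Real.rpow_neg (by norm_num),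
      Real.rpow_natCast]
    norm_num
  rw [h2neg2] at h2
  -- Bernoulli
  have hB : 1 - K * ε ≤ (1-ε) ^ K := by
    have h := one_add_mul_self_le_rpow_one_add
      (show (-1:ℝ) ≤ -ε by linarith) hK1
    rw [show (1:ℝ) + -ε = 1 - ε by ring] at h
    linarith
  have hpfin : (1 - K * ε) / 4 ≤ p := by
    have := mul_le_mul_of_nonneg_right hB (show (0:ℝ) ≤ 1/4 by norm_num)
    linarith
  have hppos : 0 < p := by linarith
  -- the max is attained at an edge
  obtain ⟨q, -, hq⟩ := Finset.exists_mem_eq_sup' hne w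
  have hadj : T.Adj q.1 q.2 := by
    by_contra hcon
    rw [hpdef, hq] at hppos
    simp [hwdef, hcon] at hppos
  have hprod : (1 - K * ε) / 4 ≤ u q.1 * u q.2 := by
    have : w q = u q.1 * u q.2 := by simp [hwdef, hadj]
    rw [hpdef, hq, this] at hpfin
    exact hpfin
  have hsumij : u q.1 + u q.2 ≤ 1 := by
    have hne' : q.1 ≠ q.2 := hadj.ne
    calc u q.1 + u q.2 = ∑ t ∈ ({q.1, q.2} : Finset (Fin m)), u t := by
          rw [Finset.sum_pair hne']
      _ ≤ ∑ t, u t := Finset.sum_le_sum_of_subset_of_nonneg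
          (Finset.subset_univ _) (fun t _ _ => hu t)
      _ = 1 := hsum
  -- final step
  have hc2 : (c * Real.sqrt ε) ^ 2 = K / 4 * ε := by
    rw [hcdef, mul_pow, div_pow, Real.sq_sqrt hK0.le, Real.sq_sqrt hε.le]
    ring
  have hcc0 : 0 ≤ c := by rw [hcdef]; positivity
  have final : ∀ a b : Fin m, (1 - K * ε) / 4 ≤ u a * u b → u a + u b ≤ 1 →
      1 / 2 - c * Real.sqrt ε ≤ u a := fun a b h1' h2' =>
    near_half_aux hε.le hcc0 hc2 (hu a) (hu b) h1' h2'
  refine ⟨q.1, q.2, hadj, final q.1 q.2 hprod hsumij, ?_⟩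
  refine final q.2 q.1 ?_ (by linarith)
  rw [mul_comm (u q.2) (u q.1)]; exact hprod

end
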